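/- Let p be a prime and consider the ideal J = (X², X(pY + 1)) in ℤ_p[X, Y]. Then J is δ-stable for the δ-structure with δ(X) = δ(Y) = 0; moreover ℤ_p[X,Y]/J is p-torsion-free, and 𝔽_p[X,Y]/(X², X(pY+1)) ≅ 𝔽_p[Y] (in particular the mod p reduction is a regular ring), while ℤ_p[X,Y]/J is not reduced. -/

import Mathlib

open MvPolynomial

noncomputable def EE (R : Type*) [CommRing R] :
    MvPolynomial (Fin 2) R ≃ₐ[R] Polynomial (Polynomial R) :=
  (MvPolynomial.finSuccEquiv R 1).trans <| Polynomial.mapAlgEquiv <|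
    (MvPolynomial.finSuccEquiv R 0).trans <| Polynomial.mapAlgEquiv <|
      MvPolynomial.isEmptyAlgEquiv R (Fin 0)

lemma EE_X0 (R : Type*) [CommRing R] : EE R (X 0) = Polynomial.X := by
  simp [EE, finSuccEquiv_X_zero]

lemma EE_X1 (R : Type*) [CommRing R] : EE R (X 1) = Polynomial.C Polynomial.X := by
  have : (X 1 : MvPolynomial (Fin 2) R) = X (Fin.succ 0) := rfl
  simp [EE, this, finSuccEquiv_X_succ, finSuccEquiv_X_zero]

lemma mem_span_sq_iff {R : Type*} [CommRing R] (c : R) (f : Polynomial R) :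
    f ∈ Ideal.span ({Polynomial.X ^ 2, Polynomial.X * Polynomial.C c} : Set (Polynomial R)) ↔
      f.coeff 0 = 0 ∧ c ∣ f.coeff 1 := by
  rw [Ideal.mem_span_pair]
  constructor
  · rintro ⟨u, v, rfl⟩
    constructor
    · simp [Polynomial.mul_coeff_zero]
    · refine ⟨v.coeff 0, ?_⟩
      have e : u * Polynomial.X ^ 2 + v * (Polynomial.X * Polynomial.C c)
          = (u * Polynomial.X) * Polynomial.X + (v * Polynomial.C c) * Polynomial.X := by ring
      rw [e, Polynomial.coeff_add, show (1:ℕ) = 0 + 1 from rfl,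
        Polynomial.coeff_mul_X, Polynomial.coeff_mul_X, Polynomial.mul_coeff_zero,
        Polynomial.mul_coeff_zero]
      simp [mul_comm]
  · rintro ⟨h0, w, hw⟩
    refine ⟨f.divX.divX, Polynomial.C w, ?_⟩
    have h1 : f.divX.coeff 0 = c * w := by rw [Polynomial.coeff_divX, hw]
    have e2 : Polynomial.X * f.divX.divX + Polynomial.C (c * w) = f.divX := by
      rw [← h1]; exact Polynomial.X_mul_divX_add f.divX
    have e1 : Polynomial.X * f.divX = f := by
      conv_rhs => rw [← Polynomial.X_mul_divX_add f, h0]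
      simp
    calc f.divX.divX * Polynomial.X ^ 2 + Polynomial.C w * (Polynomial.X * Polynomial.C c)
        = Polynomial.X * (Polynomial.X * f.divX.divX + Polynomial.C (c*w)) := by
          simp [Polynomial.C_mul]; ring
      _ = f := by rw [e2, e1]

section Zp
variable {p : ℕ} [hp : Fact p.Prime]

lemma pS_ne_zero : (p : Polynomial ℤ_[p]) ≠ 0 :=
  Nat.cast_ne_zero.mpr hp.out.ne_zero

lemma not_c_dvd_one : ¬ ((p : Polynomial ℤ_[p]) * Polynomial.X + 1 ∣ 1) := by
  rintro ⟨d, hd⟩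
  have hu : IsUnit ((p : Polynomial ℤ_[p]) * Polynomial.X + 1) :=
    IsUnit.of_mul_eq_one d hd.symm
  have h0 := Polynomial.natDegree_eq_zero_of_isUnit hu
  have h1 : ((p : Polynomial ℤ_[p]) * Polynomial.X + 1).natDegree = 1 := by
    have := Polynomial.natDegree_linear (a := (p : ℤ_[p])) (b := 1)
      (Nat.cast_ne_zero.mpr hp.out.ne_zero)
    simpa using this
  omega

lemma c_cancel (a u : Polynomial ℤ_[p])
    (h : (p : Polynomial ℤ_[p]) * a = ((p : Polynomial ℤ_[p]) * Polynomial.X + 1) * u) :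
    ((p : Polynomial ℤ_[p]) * Polynomial.X + 1) ∣ a := by
  have hu : u = (p : Polynomial ℤ_[p]) * (a - Polynomial.X * u) := by
    linear_combination -h
  refine ⟨a - Polynomial.X * u, ?_⟩
  have h2 : (p : Polynomial ℤ_[p]) * a
      = (p : Polynomial ℤ_[p]) * (((p : Polynomial ℤ_[p]) * Polynomial.X + 1)
          * (a - Polynomial.X * u)) := by
    linear_combination h + ((p : Polynomial ℤ_[p]) * Polynomial.X + 1) * hu
  exact mul_left_cancel₀ pS_ne_zero h2

end Zp

lemma frob_congr {p : ℕ} [hp : Fact p.Prime] (f : MvPolynomial (Fin 2) ℤ_[p]) :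
    ∃ g, expand p f = f ^ p + (p : MvPolynomial (Fin 2) ℤ_[p]) * g := by
  have hdvd : (MvPolynomial.C (p : ℤ_[p])) ∣ (expand p f - f ^ p) := by
    rw [MvPolynomial.C_dvd_iff_dvd_coeff]
    intro m
    have hker : ∀ x : ℤ_[p], PadicInt.toZMod x = 0 → (p : ℤ_[p]) ∣ x := by
      intro x hx
      have : x ∈ RingHom.ker (PadicInt.toZMod (p := p)) := hx
      rw [PadicInt.ker_toZMod, PadicInt.maximalIdeal_eq_span_p,
        Ideal.mem_span_singleton] at this
      exact this
    apply hker
    have hmap : MvPolynomial.map (PadicInt.toZMod (p := p)) (expand p f - f ^ p) = 0 := by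
      rw [map_sub, MvPolynomial.map_expand, map_pow, MvPolynomial.expand_zmod, sub_self]
    rw [← MvPolynomial.coeff_map, hmap, MvPolynomial.coeff_zero]
  obtain ⟨g, hg⟩ := hdvd
  refine ⟨g, ?_⟩
  have : (p : MvPolynomial (Fin 2) ℤ_[p]) = MvPolynomial.C (p : ℤ_[p]) :=
    (map_natCast (MvPolynomial.C : ℤ_[p] →+* _) p).symm
  rw [this, ← hg]; ring

lemma aeval_pow_eq_expand {p : ℕ} [hp : Fact p.Prime] (f : MvPolynomial (Fin 2) ℤ_[p]) :
    aeval (fun i : Fin 2 => (X i : MvPolynomial (Fin 2) ℤ_[p]) ^ p) f = expand p f := by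
  rfl

lemma mem_span_pair_equiv {R A B : Type*} [CommSemiring R] [CommRing A] [CommRing B]
    [Algebra R A] [Algebra R B] (e : A ≃ₐ[R] B)
    (a b x : A) : x ∈ Ideal.span ({a, b} : Set A) ↔
      e x ∈ Ideal.span ({e a, e b} : Set B) := by
  rw [Ideal.mem_span_pair, Ideal.mem_span_pair]
  constructor
  · rintro ⟨u, v, rfl⟩
    exact ⟨e u, e v, by rw [← map_mul, ← map_mul, ← map_add]⟩
  · rintro ⟨u, v, h⟩
    refine ⟨e.symm u, e.symm v, ?_⟩
    apply e.injective
    rw [← h, map_add, map_mul, map_mul, e.apply_symm_apply, e.apply_symm_apply]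

/-- Let `p` be a prime and `J = (X², X(pY+1)) ⊆ ℤ_p[X,Y]`, where
`ℤ_p[X,Y]` carries the δ-structure with `δ(X) = δ(Y) = 0`, i.e. the Frobenius lift
`φ : f(X,Y) ↦ f(X^p, Y^p)`.  Then `J` is δ-stable (for every `f ∈ J` one has
`φ(f) = f^p + p·g` with `g ∈ J`), the quotient `ℤ_p[X,Y]/J` is `p`-torsion-free,
the mod-`p` reduction satisfies `𝔽_p[X,Y]/(X², X(pY+1)) ≅ 𝔽_p[Y]` (a regular ring),
but `ℤ_p[X,Y]/J` is not reduced. -/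
theorem deltaStable_pathological_example
    (p : ℕ) [Fact p.Prime]
    (J : Ideal (MvPolynomial (Fin 2) ℤ_[p]))
    (hJ : J = Ideal.span
      ({X 0 ^ 2, X 0 * ((p : MvPolynomial (Fin 2) ℤ_[p]) * X 1 + 1)} :
        Set (MvPolynomial (Fin 2) ℤ_[p]))) :
    (∀ f ∈ J, ∃ g ∈ J,
        (aeval (fun i : Fin 2 => (X i : MvPolynomial (Fin 2) ℤ_[p]) ^ p)) f
          = f ^ p + (p : MvPolynomial (Fin 2) ℤ_[p]) * g) ∧
      (∀ x : MvPolynomial (Fin 2) ℤ_[p] ⧸ J,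
        (p : MvPolynomial (Fin 2) ℤ_[p] ⧸ J) * x = 0 → x = 0) ∧
      Nonempty ((MvPolynomial (Fin 2) (ZMod p) ⧸
          Ideal.span ({X 0 ^ 2, X 0 * ((p : MvPolynomial (Fin 2) (ZMod p)) * X 1 + 1)} :
            Set (MvPolynomial (Fin 2) (ZMod p)))) ≃+* Polynomial (ZMod p)) ∧
      ¬ IsReduced (MvPolynomial (Fin 2) ℤ_[p] ⧸ J) := by
  have hp : Fact p.Prime := ‹_›
  set c : Polynomial ℤ_[p] := (p : Polynomial ℤ_[p]) * Polynomial.X + 1 with hc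
  -- images of the generators
  have eA : EE ℤ_[p] (X 0 ^ 2) = Polynomial.X ^ 2 := by rw [map_pow, EE_X0]
  have eB : EE ℤ_[p] (X 0 * ((p : MvPolynomial (Fin 2) ℤ_[p]) * X 1 + 1))
      = Polynomial.X * Polynomial.C c := by
    rw [map_mul, map_add, map_mul, map_natCast, map_one, EE_X0, EE_X1, hc,
      map_add, map_mul, map_one, Polynomial.C_eq_natCast]
  -- membership criterion
  have memJ : ∀ f, f ∈ J ↔
      (EE ℤ_[p] f).coeff 0 = 0 ∧ c ∣ (EE ℤ_[p] f).coeff 1 := by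
    intro f
    rw [hJ, mem_span_pair_equiv (EE ℤ_[p]), eA, eB, mem_span_sq_iff]
  -- p-torsion-freeness (ideal form)
  have htor : ∀ f, (p : MvPolynomial (Fin 2) ℤ_[p]) * f ∈ J → f ∈ J := by
    intro f hf
    rw [memJ] at hf ⊢
    have hmap : EE ℤ_[p] ((p : MvPolynomial (Fin 2) ℤ_[p]) * f)
        = Polynomial.C (p : Polynomial ℤ_[p]) * EE ℤ_[p] f := by
      rw [map_mul, map_natCast]
      norm_cast
    rw [hmap] at hf
    obtain ⟨h0, h1⟩ := hf
    rw [Polynomial.coeff_C_mul] at h0 h1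
    constructor
    · rcases mul_eq_zero.mp h0 with h | h
      · exact absurd h pS_ne_zero
      · exact h
    · obtain ⟨u, hu⟩ := h1
      exact c_cancel _ u hu
  refine ⟨?_, ?_, ?_, ?_⟩
  · -- δ-stability
    intro f hf
    have hexp : expand p f ∈ J := by
      rw [hJ] at hf
      obtain ⟨u, v, huv⟩ := Ideal.mem_span_pair.mp hf
      have hg1 : expand p (X 0 ^ 2 : MvPolynomial (Fin 2) ℤ_[p]) ∈ J := by
        have h2 : ((X 0 : MvPolynomial (Fin 2) ℤ_[p]) ^ p) ^ 2
            = (X 0 ^ (p - 1)) ^ 2 * X 0 ^ 2 := by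
          rw [← mul_pow]
          congr 1
          rw [← pow_succ]
          congr 1
          have := hp.out.two_le
          omega
        rw [map_pow, MvPolynomial.expand_X, h2]
        exact Ideal.mul_mem_left _ _ (hJ ▸ Ideal.subset_span (Set.mem_insert _ _))
      have hg2 : expand p (X 0 * ((p : MvPolynomial (Fin 2) ℤ_[p]) * X 1 + 1)) ∈ J := by
        have hX : (X 0 : MvPolynomial (Fin 2) ℤ_[p]) ^ p = X 0 ^ (p - 2) * X 0 ^ 2 := by
          rw [← pow_add]
          congr 1
          have := hp.out.two_le
          omega
        rw [map_mul, map_add, map_mul, map_natCast, map_one, MvPolynomial.expand_X,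
          MvPolynomial.expand_X, hX]
        have : X 0 ^ (p - 2) * (X 0 : MvPolynomial (Fin 2) ℤ_[p]) ^ 2 *
            ((p : MvPolynomial (Fin 2) ℤ_[p]) * X 1 ^ p + 1)
            = (X 0 ^ (p - 2) * ((p : MvPolynomial (Fin 2) ℤ_[p]) * X 1 ^ p + 1)) *
              (X 0 ^ 2) := by ring
        rw [this]
        exact Ideal.mul_mem_left _ _ (hJ ▸ Ideal.subset_span (Set.mem_insert _ _))
      have : expand p f = expand p u * expand p (X 0 ^ 2)
          + expand p v * expand p (X 0 * ((p : MvPolynomial (Fin 2) ℤ_[p]) * X 1 + 1)) := by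
        rw [← map_mul, ← map_mul, ← map_add, huv]
      rw [this]
      exact Ideal.add_mem _ (Ideal.mul_mem_left _ _ hg1) (Ideal.mul_mem_left _ _ hg2)
    have hfp : f ^ p ∈ J := Ideal.pow_mem_of_mem J hf p hp.out.pos
    obtain ⟨g₀, hg₀⟩ := frob_congr f
    have hpg : (p : MvPolynomial (Fin 2) ℤ_[p]) * g₀ ∈ J := by
      have : (p : MvPolynomial (Fin 2) ℤ_[p]) * g₀ = expand p f - f ^ p := by
        rw [hg₀]; ring
      rw [this]
      exact Ideal.sub_mem _ hexp hfp
    exact ⟨g₀, htor g₀ hpg, by rw [aeval_pow_eq_expand, hg₀]⟩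
  · -- p-torsion-free quotient
    intro x hx
    obtain ⟨f, rfl⟩ := Ideal.Quotient.mk_surjective x
    have : Ideal.Quotient.mk J ((p : MvPolynomial (Fin 2) ℤ_[p]) * f) = 0 := by
      rw [map_mul, map_natCast]
      exact hx
    rw [Ideal.Quotient.eq_zero_iff_mem] at this
    rw [Ideal.Quotient.eq_zero_iff_mem]
    exact htor f this
  · -- mod p reduction
    have hps : (p : MvPolynomial (Fin 2) (ZMod p)) = 0 := by
      exact_mod_cast CharP.cast_eq_zero (MvPolynomial (Fin 2) (ZMod p)) p
    have hgen : (X 0 : MvPolynomial (Fin 2) (ZMod p)) *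
        ((p : MvPolynomial (Fin 2) (ZMod p)) * X 1 + 1) = X 0 := by
      rw [hps]; ring
    have hspan : Ideal.span ({X 0 ^ 2, X 0 * ((p : MvPolynomial (Fin 2) (ZMod p)) * X 1 + 1)} :
        Set (MvPolynomial (Fin 2) (ZMod p))) = Ideal.span {X 0} := by
      rw [hgen]
      apply le_antisymm
      · rw [Ideal.span_le]
        rintro g (rfl | rfl)
        · exact Ideal.mem_span_singleton.mpr (dvd_pow_self _ two_ne_zero)
        · exact Ideal.subset_span rfl
      · rw [Ideal.span_le]
        rintro g rfl
        exact Ideal.subset_span (Set.mem_insert_of_mem _ rfl)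
    have e3 := Ideal.quotientEquiv (Ideal.span ({X 0} : Set (MvPolynomial (Fin 2) (ZMod p))))
      (Ideal.span ({Polynomial.X} : Set (Polynomial (Polynomial (ZMod p)))))
      (EE (ZMod p)).toRingEquiv
      (by rw [Ideal.map_span, Set.image_singleton]
          show _ = Ideal.span {EE (ZMod p) (X 0)}
          rw [EE_X0])
    have e4 := (Polynomial.quotientSpanXSubCAlgEquiv (0 : Polynomial (ZMod p))).toRingEquiv
    have heq : Ideal.span ({Polynomial.X} : Set (Polynomial (Polynomial (ZMod p))))
        = Ideal.span {Polynomial.X - Polynomial.C 0} := by simp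
    exact ⟨(Ideal.quotEquivOfEq hspan).trans
      (e3.trans ((Ideal.quotEquivOfEq heq).trans e4))⟩
  · -- not reduced
    intro hred
    have h2 : (Ideal.Quotient.mk J (X 0)) ^ 2 = 0 := by
      rw [← map_pow, Ideal.Quotient.eq_zero_iff_mem]
      exact hJ ▸ Ideal.subset_span (Set.mem_insert _ _)
    have h0 : Ideal.Quotient.mk J (X 0) = 0 := IsNilpotent.eq_zero ⟨2, h2⟩
    rw [Ideal.Quotient.eq_zero_iff_mem, memJ] at h0
    obtain ⟨-, h1⟩ := h0
    rw [EE_X0, Polynomial.coeff_X_one] at h1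
    exact not_c_dvd_one h1
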